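/- arXiv:2010.12987 — 9 statements merged into one kernel-verified Lean document; each statement's English description precedes it below -/
import Mathlib

section
/- For every positive integer n and every k ≥ 0, T^k(n) = (3^(Σ_{i=1}^k x_i) · n + Σ_{i=1}^k x_i · 2^{i-1} · 3^{Σ_{λ=i+1}^k x_λ}) / 2^k, where x_i = T^{i-1}(n) mod 2. -/
def T (n : ℕ) : ℕ := if n % 2 = 0 then n / 2 else (3 * n + 1) / 2

lemma two_mul_T (m : ℕ) : 2 * T m = 3 ^ (m % 2) * m + m % 2 := by
  unfold T
  split <;> rename_i h
  · simp [h]; omega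
  · have h1 : m % 2 = 1 := by omega
    simp [h1]; omega

theorem stmt_0 (n : ℕ) (hn : 1 ≤ n) (k : ℕ)
    (x : ℕ → ℕ) (hx : ∀ i, x i = T^[i - 1] n % 2) :
    2 ^ k * T^[k] n =
      3 ^ (∑ i ∈ Finset.Icc 1 k, x i) * n +
        ∑ i ∈ Finset.Icc 1 k, x i * 2 ^ (i - 1) * 3 ^ (∑ l ∈ Finset.Icc (i + 1) k, x l) := by
  induction k with
  | zero => simp
  | succ k ih =>
    have hxk : x (k + 1) = T^[k] n % 2 := by simpa using hx (k + 1)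
    have hL : 2 ^ (k + 1) * T^[k + 1] n
        = 3 ^ (x (k + 1)) * (2 ^ k * T^[k] n) + x (k + 1) * 2 ^ k := by
      calc 2 ^ (k + 1) * T^[k + 1] n = 2 ^ k * (2 * T (T^[k] n)) := by
              rw [Function.iterate_succ_apply']; ring
        _ = 2 ^ k * (3 ^ (T^[k] n % 2) * T^[k] n + T^[k] n % 2) := by rw [two_mul_T]
        _ = _ := by rw [← hxk]; ring
    rw [hL, ih]
    have h1 : ∑ i ∈ Finset.Icc 1 (k + 1), x i = (∑ i ∈ Finset.Icc 1 k, x i) + x (k + 1) :=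
      Finset.sum_Icc_succ_top (by omega) _
    have h2 : ∑ i ∈ Finset.Icc 1 (k + 1), x i * 2 ^ (i - 1) * 3 ^ (∑ l ∈ Finset.Icc (i + 1) (k + 1), x l)
        = (∑ i ∈ Finset.Icc 1 k, x i * 2 ^ (i - 1) * 3 ^ ((∑ l ∈ Finset.Icc (i + 1) k, x l) + x (k + 1)))
          + x (k + 1) * 2 ^ k * 3 ^ (∑ l ∈ Finset.Icc (k + 2) (k + 1), x l) := by
      rw [Finset.sum_Icc_succ_top (by omega)]
      congr 1
      apply Finset.sum_congr rfl
      intro i hi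
      simp only [Finset.mem_Icc] at hi
      rw [Finset.sum_Icc_succ_top (by omega)]
    rw [h1, h2]
    have h3 : Finset.Icc (k + 2) (k + 1) = ∅ := by
      apply Finset.Icc_eq_empty; omega
    rw [h3]
    simp only [Finset.sum_empty, pow_zero, pow_add, mul_one]
    rw [mul_add, Finset.mul_sum, ← add_assoc]
    congr 1
    congr 1
    · ring
    · exact Finset.sum_congr rfl (fun i _ => by ring)
end

section
/- For all positive integers k and n, T^{k-1}(n + 2^{k-1}) and T^{k-1}(n) have opposite parities; that is, x_{n+2^{k-1},k} = 1 + x_{n,k} mod 2, where x_{n,k} = T^{k-1}(n) mod 2. -/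
lemma T_key : ∀ j m, m % 2 = 1 → ∀ n, ∃ m', m' % 2 = 1 ∧
    T^[j] (n + 2 ^ j * m) = T^[j] n + m' := by
  intro j
  induction j with
  | zero => intro m hm n; exact ⟨m, hm, by simp⟩
  | succ j ih =>
    intro m hm n
    have h2 : (2 : ℕ) ^ (j + 1) = 2 * 2 ^ j := by ring
    by_cases hpar : n % 2 = 0
    · have step : T (n + 2 ^ (j + 1) * m) = T n + 2 ^ j * m := by
        unfold T
        rw [show (2:ℕ) ^ (j + 1) * m = 2 * (2 ^ j * m) by ring]
        rw [if_pos hpar, if_pos (by omega)]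
        omega
      obtain ⟨m', hm', hm''⟩ := ih m hm (T n)
      exact ⟨m', hm', by
        rw [Function.iterate_succ_apply, Function.iterate_succ_apply, step, hm'']⟩
    · have step : T (n + 2 ^ (j + 1) * m) = T n + 2 ^ j * (3 * m) := by
        unfold T
        rw [show (2:ℕ) ^ (j + 1) * m = 2 * (2 ^ j * m) by ring]
        rw [if_neg hpar, if_neg (by omega)]
        rw [show (2:ℕ) ^ j * (3 * m) = 3 * (2 ^ j * m) by ring]
        omega
      obtain ⟨m', hm', hm''⟩ := ih (3 * m) (by omega) (T n)
      exact ⟨m', hm', by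
        rw [Function.iterate_succ_apply, Function.iterate_succ_apply, step, hm'']⟩

theorem stmt_1 (k n : ℕ) (hk : 1 ≤ k) (hn : 1 ≤ n) :
    T^[k - 1] (n + 2 ^ (k - 1)) % 2 = (1 + T^[k - 1] n % 2) % 2 := by
  obtain ⟨m', hm', h⟩ := T_key (k - 1) 1 rfl n
  rw [mul_one] at h
  rw [h]
  omega
end

section
/- For every positive integer k, the sequence n ↦ T^{k-1}(n) mod 2 is periodic in n with period 2^k; that is, T^{k-1}(n + 2^k) ≡ T^{k-1}(n) (mod 2) for all n ≥ 1. -/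
lemma T_aux (k : ℕ) : ∀ j, j < k → ∀ n, ∃ e, T^[j] (n + 2 ^ k) = T^[j] n + 3 ^ e * 2 ^ (k - j) := by
  intro j
  induction j with
  | zero => intro _ n; exact ⟨0, by simp⟩
  | succ j ih =>
    intro hj n
    obtain ⟨e, he⟩ := ih (by omega) n
    have hd : k - j = (k - (j + 1)) + 1 := by omega
    set m := T^[j] n with hm
    set A := 3 ^ e * 2 ^ (k - (j + 1)) with hA
    have he2 : T^[j] (n + 2 ^ k) = m + 2 * A := by
      rw [he, hd, pow_succ]; ring
    rcases Nat.even_or_odd m with hpar | hpar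
    · refine ⟨e, ?_⟩
      rw [Function.iterate_succ_apply', Function.iterate_succ_apply', he2, ← hm, ← hA]
      have h0 : m % 2 = 0 := Nat.even_iff.mp hpar
      simp only [T]
      have : (m + 2 * A) % 2 = 0 := by omega
      rw [if_pos this, if_pos h0]
      omega
    · refine ⟨e + 1, ?_⟩
      have h3 : 3 ^ (e + 1) * 2 ^ (k - (j + 1)) = 3 * A := by rw [hA, pow_succ]; ring
      rw [Function.iterate_succ_apply', Function.iterate_succ_apply', he2, ← hm, h3]
      have h1 : m % 2 = 1 := Nat.odd_iff.mp hpar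
      simp only [T]
      have : (m + 2 * A) % 2 = 1 := by omega
      rw [if_neg (by omega), if_neg (by omega)]
      omega

theorem stmt_2 (k : ℕ) (hk : 1 ≤ k) (n : ℕ) (hn : 1 ≤ n) :
    T^[k - 1] (n + 2 ^ k) % 2 = T^[k - 1] n % 2 := by
  obtain ⟨e, he⟩ := T_aux k (k - 1) (by omega) n
  have h1 : k - (k - 1) = 1 := by omega
  rw [he, h1]
  omega
end

section
/- Let k be a positive integer and write n = 2^k · p + υ with 0 ≤ υ < 2^k and υ ≥ 1. Then T^k(n) = 3^{d} · p + T^k(υ), where d = Σ_{i=1}^k (T^{i-1}(υ) mod 2). -/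
lemma Tstep (k p v : ℕ) : T (2 ^ (k + 1) * p + v) = 2 ^ k * (3 ^ (v % 2) * p) + T v := by
  have h2 : 2 ^ (k + 1) * p = 2 * (2 ^ k * p) := by ring
  have h3 : 2 ^ k * (3 * p) = 3 * (2 ^ k * p) := by ring
  rcases Nat.mod_two_eq_zero_or_one v with h | h
  · have e1 : T v = v / 2 := by simp [T, h]
    have hm : (2 * (2 ^ k * p) + v) % 2 = 0 := by omega
    rw [h, pow_zero, one_mul, h2, e1]
    simp only [T, hm, if_true]
    omega
  · have e1 : T v = (3 * v + 1) / 2 := by simp [T, h]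
    have hm : ¬(2 * (2 ^ k * p) + v) % 2 = 0 := by omega
    rw [h, pow_one, h3, h2, e1]
    simp only [T, hm, if_false]
    omega

lemma aux5 (k p v : ℕ) : T^[k] (2 ^ k * p + v) =
    3 ^ (∑ i ∈ Finset.range k, T^[i] v % 2) * p + T^[k] v := by
  induction k generalizing p v with
  | zero => simp
  | succ k ih =>
    rw [Function.iterate_succ_apply, Tstep, ih (3 ^ (v % 2) * p) (T v),
      Finset.sum_range_succ' (fun i => T^[i] v % 2)]
    simp only [Function.iterate_succ_apply, Function.iterate_zero_apply]
    ring

theorem stmt_5 (k : ℕ) (hk : 1 ≤ k) (p υ : ℕ) (hυ1 : 1 ≤ υ) (hυ2 : υ < 2 ^ k) :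
    T^[k] (2 ^ k * p + υ) =
      3 ^ (∑ i ∈ Finset.range k, T^[i] υ % 2) * p + T^[k] υ := by
  exact aux5 k p υ
end

section
/- For every positive integer k and every υ with 1 ≤ υ < 2^k, it holds that T^k(υ) < 3^{d_{υ,k}}, where d_{υ,k} = Σ_{i=1}^k (T^{i-1}(υ) mod 2). -/
lemma T_aux_s6 : ∀ k c n : ℕ, n < 2 ^ k * c →
    T^[k] n < 3 ^ (∑ i ∈ Finset.range k, T^[i] n % 2) * c := by
  intro k
  induction k with
  | zero => intro c n h; simpa using h
  | succ k ih =>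
    intro c n h
    rw [Finset.sum_range_succ']
    simp only [Function.iterate_succ_apply, Function.iterate_zero_apply]
    by_cases hn : n % 2 = 0
    · have hT : T n = n / 2 := by simp [T, hn]
      have h2 : T n < 2 ^ k * c := by
        rw [hT]
        have : n < 2 * (2 ^ k * c) := by
          rw [← mul_assoc]; rw [pow_succ] at h; linarith [h]
        omega
      simpa [hn] using ih c (T n) h2
    · have hT : T n = (3 * n + 1) / 2 := by simp [T, hn]
      have h2 : T n < 2 ^ k * (3 * c) := by
        rw [hT]
        have h3 : 3 * n + 1 < 2 * (2 ^ k * (3 * c)) := by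
          rw [pow_succ] at h
          nlinarith [h]
        omega
      have := ih (3 * c) (T n) h2
      have hn1 : n % 2 = 1 := by omega
      rw [hn1, pow_succ]
      calc T^[k] (T n) < 3 ^ (∑ i ∈ Finset.range k, T^[i] (T n) % 2) * (3 * c) := this
        _ = 3 ^ (∑ i ∈ Finset.range k, T^[i] (T n) % 2) * 3 * c := by ring

theorem stmt_6 (k : ℕ) (hk : 1 ≤ k) (υ : ℕ) (hυ1 : 1 ≤ υ) (hυ2 : υ < 2 ^ k) :
    T^[k] υ < 3 ^ (∑ i ∈ Finset.range k, T^[i] υ % 2) := by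
  have := T_aux_s6 k 1 υ (by simpa using hυ2)
  simpa using this
end

section
/- For every positive integer n, if p ≡ 2^n - 1 (mod 2^n) (i.e., p = 2^n·λ + 2^n - 1 for some λ ≥ 0), then T^k(p) is odd for every k = 0, 1, ..., n-1, and T^k(p) ≡ 2 (mod 3) for every k = 1, 2, ..., n. -/
theorem stmt_7 (n : ℕ) (hn : 1 ≤ n) (p lam : ℕ) (hp : p = 2 ^ n * lam + 2 ^ n - 1) :
    (∀ k, k ≤ n - 1 → T^[k] p % 2 = 1) ∧
    (∀ k, 1 ≤ k → k ≤ n → T^[k] p % 3 = 2) := by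
  have key : ∀ k, k ≤ n → T^[k] p = 3 ^ k * 2 ^ (n - k) * (lam + 1) - 1 := by
    intro k
    induction k with
    | zero =>
      intro _
      simp [hp]
      ring_nf
    | succ k ih =>
      intro hk
      have hk' : k ≤ n := by omega
      have hv := ih hk'
      have h1 : 1 ≤ n - k := by omega
      have hsplit : 2 ^ (n - k) = 2 * 2 ^ (n - (k+1)) := by
        rw [← pow_succ']
        congr 1
        omega
      set M := 3 ^ k * 2 ^ (n - (k+1)) * (lam + 1) with hM
      have hM1 : 0 < M := by rw [hM]; positivity
      have hv' : T^[k] p = 2 * M - 1 := by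
        rw [hv, hsplit, hM]; ring_nf
      have hodd : (2 * M - 1) % 2 = 1 := by omega
      have hT : T (2 * M - 1) = 3 * M - 1 := by
        simp only [T, hodd]
        norm_num
        omega
      rw [Function.iterate_succ_apply', hv', hT]
      congr 1
      rw [hM, pow_succ]
      ring
  constructor
  · intro k hk
    have hk' : k ≤ n := by omega
    rw [key k hk']
    have h1 : 1 ≤ n - k := by omega
    have hsplit : 2 ^ (n - k) = 2 * 2 ^ (n - k - 1) := by
      rw [← pow_succ']; congr 1; omega
    rw [hsplit]
    have h3 : 0 < 3 ^ k * 2 ^ (n - k - 1) * (lam + 1) := by positivity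
    set M := 3 ^ k * 2 ^ (n - k - 1) * (lam + 1)
    have : 3 ^ k * (2 * 2 ^ (n - k - 1)) * (lam + 1) = 2 * M := by ring
    rw [this]
    omega
  · intro k hk1 hkn
    rw [key k hkn]
    obtain ⟨j, hj⟩ : ∃ j, k = j + 1 := ⟨k - 1, by omega⟩
    subst hj
    have hsplit : 3 ^ (j + 1) = 3 * 3 ^ j := by rw [pow_succ]; ring
    rw [hsplit]
    have h3 : 0 < 3 ^ j * 2 ^ (n - (j+1)) * (lam + 1) := by positivity
    set M := 3 ^ j * 2 ^ (n - (j+1)) * (lam + 1)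
    have : 3 * 3 ^ j * 2 ^ (n - (j + 1)) * (lam + 1) = 3 * M := by ring
    rw [this]
    omega
end

section
/- For every n ≥ 0 and every positive integer m, |{i ∈ ℕ⁺ : T^n(i) = m}| ≤ F_n, where (F_n) is the Fibonacci-type sequence with F_0 = 1, F_1 = 2, F_{n+2} = F_{n+1} + F_n. -/
def F : ℕ → ℕ
  | 0 => 1
  | 1 => 2
  | n + 2 => F (n + 1) + F n

def S (n m : ℕ) : Set ℕ := {i | 1 ≤ i ∧ T^[n] i = m}

lemma le_two_T (j : ℕ) : j ≤ 2 * T j := by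
  unfold T; split <;> omega

lemma iter_le (n : ℕ) : ∀ i m : ℕ, T^[n] i = m → i ≤ 2 ^ n * m := by
  induction n with
  | zero => intro i m h; simpa using h.le
  | succ n ih =>
    intro i m h
    rw [Function.iterate_succ_apply] at h
    have h2 := ih (T i) m h
    have := le_two_T i
    calc i ≤ 2 * T i := le_two_T i
    _ ≤ 2 * (2 ^ n * m) := by omega
    _ = 2 ^ (n+1) * m := by ring

lemma Sfin (n m : ℕ) : (S n m).Finite := by
  apply Set.Finite.subset (Set.finite_Iic (2 ^ n * m))
  intro i hi
  exact iter_le n i m hi.2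

lemma S0 (m : ℕ) (hm : 1 ≤ m) : S 0 m = {m} := by
  ext i; simp [S]; omega

lemma pre (j m : ℕ) (h : T j = m) : j = 2 * m ∨ (j = (2 * m - 1) / 3 ∧ m % 3 = 2) := by
  unfold T at h
  split at h <;> omega

lemma Ssub (n m : ℕ) : S (n+1) m ⊆ S n (2 * m) ∪ S n ((2 * m - 1) / 3) := by
  intro i hi
  obtain ⟨h1, h2⟩ := hi
  rw [Function.iterate_succ_apply'] at h2
  rcases pre (T^[n] i) m h2 with h | ⟨h, _⟩
  · exact Or.inl ⟨h1, h⟩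
  · exact Or.inr ⟨h1, h⟩

lemma Ssub2 (n m : ℕ) (h3 : m % 3 ≠ 2) : S (n+1) m ⊆ S n (2 * m) := by
  intro i hi
  obtain ⟨h1, h2⟩ := hi
  rw [Function.iterate_succ_apply'] at h2
  rcases pre (T^[n] i) m h2 with h | ⟨h, hmod⟩
  · exact ⟨h1, h⟩
  · exact absurd hmod h3

lemma F_pos (n : ℕ) : 1 ≤ F n := by
  induction n using Nat.strong_induction_on with
  | _ n ih =>
    match n with
    | 0 => simp [F]
    | 1 => simp [F]
    | n + 2 =>
      have := ih (n+1) (by omega)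
      have := ih n (by omega)
      simp [F]; omega

lemma Bmod (n m : ℕ) (hA : ∀ m', 1 ≤ m' → (S n m').ncard ≤ F n)
    (hm : 1 ≤ m) (h3 : m % 3 = 1) : (S (n+1) m).ncard ≤ F n := by
  calc (S (n+1) m).ncard ≤ (S n (2 * m)).ncard :=
        Set.ncard_le_ncard (Ssub2 n m (by omega)) (Sfin n (2 * m))
  _ ≤ F n := hA (2 * m) (by omega)

lemma main : ∀ n m : ℕ, 1 ≤ m → (S n m).ncard ≤ F n := by
  intro n
  induction n using Nat.strong_induction_on with
  | _ n ih =>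
    match n with
    | 0 =>
      intro m hm
      rw [S0 m hm]
      simp [F]
    | n + 1 =>
      intro m hm
      by_cases h3 : m % 3 = 2
      · have hsub := Ssub n m
        have hk : 1 ≤ (2 * m - 1) / 3 := by omega
        have hcard : (S (n+1) m).ncard ≤ (S n (2*m)).ncard + (S n ((2*m-1)/3)).ncard := by
          calc (S (n+1) m).ncard ≤ (S n (2*m) ∪ S n ((2*m-1)/3)).ncard :=
            Set.ncard_le_ncard hsub ((Sfin n (2*m)).union (Sfin n ((2*m-1)/3)))
          _ ≤ _ := Set.ncard_union_le _ _
        have hk_bound : (S n ((2*m-1)/3)).ncard ≤ F n := ih n (by omega) _ hk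
        match n with
        | 0 =>
          have : (S 0 (2*m)).ncard ≤ F 0 := ih 0 (by omega) (2*m) (by omega)
          simp only [F] at *
          omega
        | n + 1 =>
          have hb : (S (n+1) (2*m)).ncard ≤ F n := by
            apply Bmod n (2*m) (ih n (by omega)) (by omega) (by omega)
          have : F (n + 1 + 1) = F (n+1) + F n := rfl
          omega
      · have := Set.ncard_le_ncard (Ssub2 n m h3) (Sfin n (2*m))
        have h2 := ih n (by omega) (2*m) (by omega)
        have hF : F n ≤ F (n+1) := by
          match n with
          | 0 => simp [F]
          | n + 1 =>
            have : F (n + 1 + 1) = F (n+1) + F n := rfl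
            have := F_pos n
            omega
        omega

theorem stmt_13 (n m : ℕ) (hm : 1 ≤ m) :
    {i : ℕ | 1 ≤ i ∧ T^[n] i = m}.ncard ≤ F n := by
  exact main n m hm
end

section
/- Fix a positive integer n and suppose the sequence a_k = (-1)^{T^k(n)} is eventually periodic. Then the trajectory (T^k(n))_{k≥0} is bounded, i.e., it eventually enters a cycle of T. -/
lemma negpow_parity (a b : ℕ) (h : ((-1 : ℤ)) ^ a = (-1) ^ b) : a % 2 = b % 2 := by
  rcases Nat.even_or_odd a with ha | ha <;> rcases Nat.even_or_odd b with hb | hb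
  · rw [Nat.even_iff] at ha hb; omega
  · rw [ha.neg_one_pow, hb.neg_one_pow] at h; norm_num at h
  · rw [ha.neg_one_pow, hb.neg_one_pow] at h; norm_num at h
  · rw [Nat.odd_iff] at ha hb; omega

lemma stepT (x y : ℕ) (hp : x % 2 = y % 2) :
    ∃ c : ℤ, (c = 1 ∨ c = 3) ∧ 2 * ((T y : ℤ) - T x) = c * ((y : ℤ) - x) := by
  rcases Nat.even_or_odd x with hx | hx
  · rw [Nat.even_iff] at hx
    have hy : y % 2 = 0 := by omega
    refine ⟨1, Or.inl rfl, ?_⟩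
    have hTx : T x = x / 2 := by simp [T, hx]
    have hTy : T y = y / 2 := by simp [T, hy]
    have h1 : 2 * (x / 2) = x := by omega
    have h2 : 2 * (y / 2) = y := by omega
    have heq : ((2 : ℤ)) * (((y / 2 : ℕ) : ℤ) - ((x / 2 : ℕ) : ℤ))
        = ((2 * (y / 2) : ℕ) : ℤ) - ((2 * (x / 2) : ℕ) : ℤ) := by push_cast; ring
    rw [hTx, hTy, heq, h1, h2]; ring
  · rw [Nat.odd_iff] at hx
    have hy : y % 2 = 1 := by omega
    refine ⟨3, Or.inr rfl, ?_⟩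
    have hTx : T x = (3 * x + 1) / 2 := by simp [T, hx]
    have hTy : T y = (3 * y + 1) / 2 := by simp [T, hy]
    have h1 : 2 * ((3 * x + 1) / 2) = 3 * x + 1 := by omega
    have h2 : 2 * ((3 * y + 1) / 2) = 3 * y + 1 := by omega
    rw [hTx, hTy]
    have : ((2 : ℤ)) * ((((3 * y + 1) / 2 : ℕ) : ℤ) - (((3 * x + 1) / 2 : ℕ) : ℤ))
        = ((2 * ((3 * y + 1) / 2) : ℕ) : ℤ) - ((2 * ((3 * x + 1) / 2) : ℕ) : ℤ) := by
      push_cast; ring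
    rw [this, h1, h2]
    push_cast; ring

lemma iter_eq (x y : ℕ) (hp : ∀ k, T^[k] x % 2 = T^[k] y % 2) :
    ∀ k, ∃ s : ℕ, (2 : ℤ) ^ k * ((T^[k] y : ℤ) - T^[k] x) = 3 ^ s * ((y : ℤ) - x) := by
  intro k
  induction k with
  | zero => exact ⟨0, by simp⟩
  | succ k ih =>
    obtain ⟨s, hs⟩ := ih
    obtain ⟨c, hc, hstep⟩ := stepT (T^[k] x) (T^[k] y) (hp k)
    rw [Function.iterate_succ_apply', Function.iterate_succ_apply']
    rcases hc with rfl | rfl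
    · refine ⟨s, ?_⟩
      have : (2 : ℤ) ^ (k + 1) * ((T (T^[k] y) : ℤ) - T (T^[k] x))
          = 2 ^ k * (1 * ((T^[k] y : ℤ) - T^[k] x)) := by
        rw [← hstep]; ring
      rw [this]; rw [one_mul, hs]
    · refine ⟨s + 1, ?_⟩
      have : (2 : ℤ) ^ (k + 1) * ((T (T^[k] y) : ℤ) - T (T^[k] x))
          = 2 ^ k * (3 * ((T^[k] y : ℤ) - T^[k] x)) := by
        rw [← hstep]; ring
      rw [this]
      have : (2 : ℤ) ^ k * (3 * ((T^[k] y : ℤ) - T^[k] x))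
          = 3 * (2 ^ k * ((T^[k] y : ℤ) - T^[k] x)) := by ring
      rw [this, hs]; ring

theorem stmt_15 (n : ℕ) (hn : 1 ≤ n)
    (h : ∃ K l : ℕ, 1 ≤ l ∧ ∀ k, K ≤ k →
      ((-1 : ℤ) ^ T^[k + l] n = (-1 : ℤ) ^ T^[k] n)) :
    ∃ j m : ℕ, 1 ≤ m ∧ T^[m] (T^[j] n) = T^[j] n := by
  obtain ⟨K, l, hl, hper⟩ := h
  set x := T^[K] n with hx
  set y := T^[K + l] n with hy
  have hiter : ∀ k, T^[k] x = T^[k + K] n := by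
    intro k; rw [hx, ← Function.iterate_add_apply]
  have hiter' : ∀ k, T^[k] y = T^[k + K + l] n := by
    intro k
    rw [hy, ← Function.iterate_add_apply]
    congr 1; omega
  have hp : ∀ k, T^[k] x % 2 = T^[k] y % 2 := by
    intro k
    have := hper (k + K) (by omega)
    have h2 := negpow_parity _ _ this
    rw [hiter, hiter', h2]
  have key : ∀ k : ℕ, (2 : ℤ) ^ k ∣ ((y : ℤ) - x) := by
    intro k
    obtain ⟨s, hs⟩ := iter_eq x y hp k
    have hdvd : (2 : ℤ) ^ k ∣ 3 ^ s * ((y : ℤ) - x) := ⟨_, hs.symm⟩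
    have hcop : IsCoprime ((2 : ℤ) ^ k) ((3 : ℤ) ^ s) := by
      apply IsCoprime.pow
      norm_num [Int.isCoprime_iff_gcd_eq_one]
    exact (hcop.dvd_of_dvd_mul_left hdvd)
  have hd0 : (y : ℤ) - x = 0 := by
    by_contra hne
    have h1 := Int.le_of_dvd (abs_pos.mpr hne) ((dvd_abs _ _).mpr (key ((y : ℤ) - x).natAbs))
    have h2 : (((y : ℤ) - x).natAbs : ℤ) < 2 ^ ((y : ℤ) - x).natAbs := by
      exact_mod_cast Nat.lt_two_pow_self (n := ((y : ℤ) - x).natAbs)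
    rw [Int.abs_eq_natAbs] at h1
    omega
  have hxy : y = x := by omega
  refine ⟨K, l, hl, ?_⟩
  have heq : T^[l] (T^[K] n) = T^[K + l] n := by
    rw [← Function.iterate_add_apply]; congr 1; omega
  rw [heq, ← hy, hxy, hx]
end

section
/- For positive integers n and k, T^k(n) ∈ {1,2} if and only if the sequence ((-1)^{T^m(n)})_{m ≥ k} is periodic with period 2 (i.e., (-1)^{T^{m+2}(n)} = (-1)^{T^m(n)} and (-1)^{T^{m+1}(n)} = -(-1)^{T^m(n)} for all m ≥ k). -/
lemma T_pos {a : ℕ} (ha : 1 ≤ a) : 1 ≤ T a := by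
  unfold T; split_ifs <;> omega

lemma parity_flip (x y : ℕ) : ((-1:ℤ)^x = -(-1:ℤ)^y) ↔ x % 2 ≠ y % 2 := by
  rcases Nat.even_or_odd x with hx|hx <;> rcases Nat.even_or_odd y with hy|hy
  · simp [hx.neg_one_pow, hy.neg_one_pow, Nat.even_iff.mp hx, Nat.even_iff.mp hy]
  · simp [hx.neg_one_pow, hy.neg_one_pow, Nat.even_iff.mp hx, Nat.odd_iff.mp hy]
  · simp [hx.neg_one_pow, hy.neg_one_pow, Nat.odd_iff.mp hx, Nat.even_iff.mp hy]
  · simp [hx.neg_one_pow, hy.neg_one_pow, Nat.odd_iff.mp hx, Nat.odd_iff.mp hy]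

lemma step {a : ℕ} (ha : 1 ≤ a) (h1 : T a % 2 ≠ a % 2) (h2 : T (T a) % 2 ≠ T a % 2) :
    a = 1 ∨ a = 2 ∨ T (T a) < a := by
  simp only [T] at h1 h2 ⊢
  split_ifs at h1 h2 ⊢ <;> omega

lemma pre_s16 {b : ℕ} (hb : 1 ≤ b) (hp : T b % 2 ≠ b % 2) (h : T b = 1 ∨ T b = 2) :
    b = 1 ∨ b = 2 := by
  simp only [T] at hp h; split_ifs at hp h <;> omega

lemma tail (n k : ℕ) (h : T^[k] n = 1 ∨ T^[k] n = 2) :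
    ∀ j, T^[k+j] n = 1 ∨ T^[k+j] n = 2 := by
  intro j; induction j with
  | zero => exact h
  | succ j ih =>
    have : T^[k+(j+1)] n = T (T^[k+j] n) := by
      rw [show k+(j+1) = (k+j)+1 by ring, Function.iterate_succ_apply']
    rw [this]
    rcases ih with h' | h' <;> rw [h'] <;> simp [T]

lemma back (n : ℕ) (hn : 1 ≤ n) :
    ∀ v k, (∀ m, k ≤ m → (-1:ℤ)^T^[m+1] n = -(-1:ℤ)^T^[m] n) →
      T^[k] n = v → v = 1 ∨ v = 2 := by
  have pos : ∀ m, 1 ≤ T^[m] n := by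
    intro m; induction m with
    | zero => exact hn
    | succ m ih2 => rw [Function.iterate_succ_apply']; exact T_pos ih2
  intro v
  induction v using Nat.strong_induction_on with
  | _ v ih =>
    intro k H hv
    have h1 := (parity_flip _ _).mp (H k le_rfl)
    have h2 := (parity_flip _ _).mp (H (k+1) (by omega))
    rw [Function.iterate_succ_apply'] at h1
    rw [Function.iterate_succ_apply', Function.iterate_succ_apply'] at h2
    rw [hv] at h1 h2
    rcases step (hv ▸ pos k) h1 h2 with h | h | h
    · exact Or.inl h
    · exact Or.inr h
    · have h3 : T (T v) = 1 ∨ T (T v) = 2 := by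
        refine ih (T (T v)) h (k+2) (fun m hm => H m (by omega)) ?_
        rw [show k+2 = (k+1)+1 from rfl, Function.iterate_succ_apply',
            Function.iterate_succ_apply', hv]
      have hTv : 1 ≤ T v := T_pos (hv ▸ pos k)
      exact pre_s16 (hv ▸ pos k) h1 (pre_s16 hTv h2 h3)

theorem stmt_16 (n k : ℕ) (hn : 1 ≤ n) (hk : 1 ≤ k) :
    (T^[k] n = 1 ∨ T^[k] n = 2) ↔
      (∀ m, k ≤ m →
        (-1 : ℤ) ^ T^[m + 2] n = (-1 : ℤ) ^ T^[m] n ∧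
        (-1 : ℤ) ^ T^[m + 1] n = -(-1 : ℤ) ^ T^[m] n) := by
  constructor
  · intro h m hm
    obtain ⟨j, rfl⟩ := Nat.exists_eq_add_of_le hm
    have ha := tail n k h j
    have e1 : T^[k+j+1] n = T (T^[k+j] n) := Function.iterate_succ_apply' T _ n
    have e2 : T^[k+j+2] n = T (T (T^[k+j] n)) := by
      rw [show k+j+2 = (k+j+1)+1 from rfl, Function.iterate_succ_apply', e1]
    rw [e1, e2]
    rcases ha with h' | h' <;> rw [h'] <;> norm_num [T]
  · intro H
    exact back n hn (T^[k] n) k (fun m hm => (H m hm).2) rfl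
end
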